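/- arXiv:2211.07055 — 2 statements merged into one kernel-verified Lean document; each statement's English description precedes it below -/
import Mathlib

section
/- Let f ∈ ℂ[x_1,…,x_n] be a polynomial of degree d (not necessarily homogeneous). Suppose there exist an integer M ≥ 1 and homogeneous linear forms a_1, …, a_m and b_1, …, b_m in x_1,…,x_n with coefficients in ℂ[[ε]] such that ε^{−M} (∏_{i=1}^m (1 + ε a_i) − ∏_{i=1}^m (1 + ε b_i)) has all coefficients in ℂ[[ε]] and is ≡ f (mod ε). Then f belongs to the border class Σ^[2md]Λ^[d]Σ; in fact each homogeneous component of f of degree j with 1 ≤ j ≤ d has border Waring rank at most 2m, and the degree-0 component of f is 0. -/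
open MvPolynomial

set_option maxHeartbeats 1000000
set_option synthInstance.maxHeartbeats 400000

noncomputable section

/-- All Laurent-series coefficients of `F` lie in `ℂ[[ε]]`, i.e. they have
no terms of negative order. -/
def HasRegularCoeffs {σ : Type*} (F : MvPolynomial σ (LaurentSeries ℂ)) : Prop :=
  ∀ (m : σ →₀ ℕ) (k : ℤ), k < 0 → (F.coeff m).coeff k = 0

/-- `F` has all coefficients in `ℂ[[ε]]` and `F ≡ f (mod ε)`, i.e. substituting
`ε = 0` into the coefficients of `F` yields `f`. -/
def ApproxTo {σ : Type*} (F : MvPolynomial σ (LaurentSeries ℂ)) (f : MvPolynomial σ ℂ) : Prop :=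
  HasRegularCoeffs F ∧ ∀ m : σ →₀ ℕ, (F.coeff m).coeff 0 = f.coeff m

/-- The Waring rank of `f` as a form of degree `d`: the least `r` such that `f` is a
sum of `r` `d`-th powers of homogeneous linear forms over `ℂ`. -/
def waringRank {n : ℕ} (f : MvPolynomial (Fin n) ℂ) (d : ℕ) : ℕ :=
  sInf {r | ∃ ℓ : Fin r → MvPolynomial (Fin n) ℂ,
    (∀ i, (ℓ i).IsHomogeneous 1) ∧ f = ∑ i, ℓ i ^ d}

/-- The border Waring rank of `f` as a form of degree `d`: the least `r` such that there
are homogeneous linear forms `ℓ₁, …, ℓ_r` with coefficients in `ℂ((ε))` whose sum of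
`d`-th powers has all coefficients in `ℂ[[ε]]` and is `≡ f (mod ε)`. -/
def borderWaringRank {n : ℕ} (f : MvPolynomial (Fin n) ℂ) (d : ℕ) : ℕ :=
  sInf {r | ∃ ℓ : Fin r → MvPolynomial (Fin n) (LaurentSeries ℂ),
    (∀ i, (ℓ i).IsHomogeneous 1) ∧ ApproxTo (∑ i, ℓ i ^ d) f}

/-- Membership in the border class `Σ^[s]Λ^[e]Σ`: `g` is approximated by a sum of `s`
powers, with exponents at most `e`, of affine linear forms over `ℂ((ε))`. -/
def MemBorderSLS {N : ℕ} (g : MvPolynomial (Fin N) ℂ) (s e : ℕ) : Prop :=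
  ∃ (L : Fin s → MvPolynomial (Fin N) (LaurentSeries ℂ)) (E : Fin s → ℕ),
    (∀ i, (L i).totalDegree ≤ 1) ∧ (∀ i, E i ≤ e) ∧ ApproxTo (∑ i, L i ^ E i) g


namespace St16

abbrev K : Type := LaurentSeries ℂ

/-- regular Laurent series -/
def SReg (s : K) : Prop := ∀ k : ℤ, k < 0 → s.coeff k = 0

def coeffHom (k : ℤ) : K →+ ℂ where
  toFun s := s.coeff k
  map_zero' := HahnSeries.coeff_zero
  map_add' _ _ := HahnSeries.coeff_add

@[simp] lemma coeffHom_apply (k : ℤ) (s : K) : coeffHom k s = s.coeff k := rfl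

lemma SReg.zero : SReg 0 := fun _ _ => HahnSeries.coeff_zero

lemma SReg.add {s t : K} (hs : SReg s) (ht : SReg t) : SReg (s + t) := by
  intro k hk; rw [HahnSeries.coeff_add, hs k hk, ht k hk, add_zero]

lemma SReg.neg {s : K} (hs : SReg s) : SReg (-s) := by
  intro k hk; rw [HahnSeries.coeff_neg, hs k hk, neg_zero]

lemma SReg.sub {s t : K} (hs : SReg s) (ht : SReg t) : SReg (s - t) := by
  rw [sub_eq_add_neg]; exact hs.add ht.neg

lemma SReg.sum {ι : Type*} {s : Finset ι} {f : ι → K} (h : ∀ i ∈ s, SReg (f i)) :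
    SReg (∑ i ∈ s, f i) := by
  intro k hk
  rw [show (∑ i ∈ s, f i).coeff k = coeffHom k (∑ i ∈ s, f i) from rfl, map_sum]
  exact Finset.sum_eq_zero fun i hi => h i hi k hk

lemma SReg.single {a : ℤ} (ha : 0 ≤ a) (z : ℂ) : SReg (HahnSeries.single a z) := by
  intro k hk
  rw [HahnSeries.coeff_single, if_neg]; omega

lemma SReg.one : SReg 1 := by
  intro k hk
  rw [HahnSeries.coeff_one, if_neg]; omega

lemma SReg.mul {s t : K} (hs : SReg s) (ht : SReg t) : SReg (s * t) := by
  intro k hk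
  rw [HahnSeries.coeff_mul]
  refine Finset.sum_eq_zero fun ij hij => ?_
  rw [Finset.mem_addAntidiagonal] at hij
  rcases lt_or_ge ij.1 0 with h | h
  · rw [hs ij.1 h, zero_mul]
  rcases lt_or_ge ij.2 0 with h2 | h2
  · rw [ht ij.2 h2, mul_zero]
  exfalso; omega

lemma SReg.coeff0_mul {s t : K} (hs : SReg s) (ht : SReg t) :
    (s * t).coeff 0 = s.coeff 0 * t.coeff 0 := by
  rw [HahnSeries.coeff_mul]
  rw [Finset.sum_subset (s₁ := Finset.antidiagonal s.isPWO_support t.isPWO_support 0)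
      (s₂ := {((0 : ℤ), (0 : ℤ))}) ?_ ?_]
  · rw [Finset.sum_singleton]
  · intro ij hij
    rw [Finset.mem_addAntidiagonal] at hij
    obtain ⟨h1, h2, h3⟩ := hij
    rw [HahnSeries.mem_support] at h1 h2
    have e1 : (0:ℤ) ≤ ij.1 := le_of_not_gt fun h => h1 (hs _ h)
    have e2 : (0:ℤ) ≤ ij.2 := le_of_not_gt fun h => h2 (ht _ h)
    have e3 : ij.1 = 0 ∧ ij.2 = 0 := by omega
    rw [Finset.mem_singleton, Prod.ext_iff]
    exact e3
  · intro x hx hnx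
    rw [Finset.mem_singleton] at hx; subst hx
    rw [Finset.mem_addAntidiagonal] at hnx
    have : s.coeff 0 = 0 ∨ t.coeff 0 = 0 := by
      by_contra hc; push_neg at hc
      exact hnx ⟨(HahnSeries.mem_support s 0).2 hc.1, (HahnSeries.mem_support t 0).2 hc.2,
        add_zero 0⟩
    rcases this with h | h <;> simp [h]

lemma SReg.pow {s : K} (hs : SReg s) (e : ℕ) : SReg (s ^ e) := by
  induction e with
  | zero => simpa using SReg.one
  | succ e ih => rw [pow_succ]; exact ih.mul hs

lemma SReg.coeff0_pow {s : K} (hs : SReg s) (e : ℕ) :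
    (s ^ e).coeff 0 = s.coeff 0 ^ e := by
  induction e with
  | zero => simp [HahnSeries.coeff_one]
  | succ e ih => rw [pow_succ, (hs.pow e).coeff0_mul hs, ih, pow_succ]

section Poly
variable {σ : Type*}

lemma sreg_of (F : MvPolynomial σ K) (hF : HasRegularCoeffs F) (m : σ →₀ ℕ) :
    SReg (F.coeff m) := hF m

lemma regAdd {F G : MvPolynomial σ K} (hF : HasRegularCoeffs F) (hG : HasRegularCoeffs G) :
    HasRegularCoeffs (F + G) := by
  intro m k hk; rw [MvPolynomial.coeff_add]
  exact SReg.add (sreg_of F hF m) (sreg_of G hG m) k hk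

lemma regSub {F G : MvPolynomial σ K} (hF : HasRegularCoeffs F) (hG : HasRegularCoeffs G) :
    HasRegularCoeffs (F - G) := by
  intro m k hk; rw [MvPolynomial.coeff_sub]
  exact SReg.sub (sreg_of F hF m) (sreg_of G hG m) k hk

lemma regSum {ι : Type*} {s : Finset ι} {F : ι → MvPolynomial σ K}
    (h : ∀ i ∈ s, HasRegularCoeffs (F i)) : HasRegularCoeffs (∑ i ∈ s, F i) := by
  intro m k hk
  rw [MvPolynomial.coeff_sum]
  exact SReg.sum (fun i hi => sreg_of _ (h i hi) m) k hk

lemma regOne : HasRegularCoeffs (1 : MvPolynomial σ K) := by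
  classical
  intro m k hk
  rw [MvPolynomial.coeff_one]
  split
  · exact SReg.one k hk
  · exact HahnSeries.coeff_zero

lemma regMul {F G : MvPolynomial σ K} (hF : HasRegularCoeffs F) (hG : HasRegularCoeffs G) :
    HasRegularCoeffs (F * G) := by
  classical
  intro m k hk
  rw [MvPolynomial.coeff_mul]
  exact SReg.sum (fun i _ => SReg.mul (sreg_of F hF i.1) (sreg_of G hG i.2)) k hk

lemma regPow {F : MvPolynomial σ K} (hF : HasRegularCoeffs F) (e : ℕ) :
    HasRegularCoeffs (F ^ e) := by
  induction e with
  | zero => simpa using regOne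
  | succ e ih => rw [pow_succ]; exact regMul ih hF

lemma regProd {ι : Type*} {s : Finset ι} {F : ι → MvPolynomial σ K}
    (h : ∀ i ∈ s, HasRegularCoeffs (F i)) : HasRegularCoeffs (∏ i ∈ s, F i) := by
  classical
  induction s using Finset.induction_on with
  | empty => simpa using regOne
  | @insert _ _ hx ih =>
      rw [Finset.prod_insert hx]
      exact regMul (h _ (Finset.mem_insert_self _ _))
        (ih fun i hi => h i (Finset.mem_insert_of_mem hi))

lemma regC {r : K} (hr : SReg r) : HasRegularCoeffs (MvPolynomial.C (σ := σ) r) := by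
  classical
  intro m k hk
  rw [MvPolynomial.coeff_C]
  split
  · exact hr k hk
  · exact HahnSeries.coeff_zero

-- ApproxTo lemmas

lemma apAdd {F G : MvPolynomial σ K} {f g : MvPolynomial σ ℂ}
    (hF : ApproxTo F f) (hG : ApproxTo G g) : ApproxTo (F + G) (f + g) := by
  refine ⟨regAdd hF.1 hG.1, fun m => ?_⟩
  rw [MvPolynomial.coeff_add, MvPolynomial.coeff_add, HahnSeries.coeff_add, hF.2 m, hG.2 m]

lemma apSub {F G : MvPolynomial σ K} {f g : MvPolynomial σ ℂ}
    (hF : ApproxTo F f) (hG : ApproxTo G g) : ApproxTo (F - G) (f - g) := by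
  refine ⟨regSub hF.1 hG.1, fun m => ?_⟩
  rw [MvPolynomial.coeff_sub, MvPolynomial.coeff_sub, HahnSeries.coeff_sub, hF.2 m, hG.2 m]

lemma apZero : ApproxTo (0 : MvPolynomial σ K) 0 := by
  constructor
  · intro m k _; simp
  · intro m; simp

lemma apSum {ι : Type*} {s : Finset ι} {F : ι → MvPolynomial σ K}
    {f : ι → MvPolynomial σ ℂ} (h : ∀ i ∈ s, ApproxTo (F i) (f i)) :
    ApproxTo (∑ i ∈ s, F i) (∑ i ∈ s, f i) := by
  classical
  induction s using Finset.induction_on with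
  | empty => simpa using apZero
  | @insert _ _ hx ih =>
      rw [Finset.sum_insert hx, Finset.sum_insert hx]
      exact apAdd (h _ (Finset.mem_insert_self _ _))
        (ih fun i hi => h i (Finset.mem_insert_of_mem hi))

lemma apMul {F G : MvPolynomial σ K} {f g : MvPolynomial σ ℂ}
    (hF : ApproxTo F f) (hG : ApproxTo G g) : ApproxTo (F * G) (f * g) := by
  classical
  refine ⟨regMul hF.1 hG.1, fun m => ?_⟩
  rw [MvPolynomial.coeff_mul, MvPolynomial.coeff_mul]
  rw [show (∑ ij ∈ Finset.HasAntidiagonal.antidiagonal m, F.coeff ij.1 * G.coeff ij.2).coeff (0:ℤ)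
      = coeffHom 0 (∑ ij ∈ Finset.HasAntidiagonal.antidiagonal m, F.coeff ij.1 * G.coeff ij.2) from rfl,
    map_sum]
  refine Finset.sum_congr rfl fun ij _ => ?_
  rw [coeffHom_apply, SReg.coeff0_mul (sreg_of F hF.1 ij.1) (sreg_of G hG.1 ij.2),
    hF.2, hG.2]

lemma apC {r : K} (hr : SReg r) :
    ApproxTo (MvPolynomial.C (σ := σ) r) (MvPolynomial.C (r.coeff 0)) := by
  classical
  refine ⟨regC hr, fun m => ?_⟩
  rw [MvPolynomial.coeff_C, MvPolynomial.coeff_C]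
  split
  · rfl
  · exact HahnSeries.coeff_zero

/-- `C ε^k` -/
def Cs (k : ℤ) : MvPolynomial σ K := MvPolynomial.C (HahnSeries.single k 1)

/-- `C z` for a complex constant -/
def CC (z : ℂ) : MvPolynomial σ K := MvPolynomial.C (HahnSeries.single 0 z)

lemma Cs_mul (u v : ℤ) : (Cs u : MvPolynomial σ K) * Cs v = Cs (u + v) := by
  rw [Cs, Cs, Cs, ← map_mul, HahnSeries.single_mul_single, one_mul]

lemma Cs_zero : (Cs 0 : MvPolynomial σ K) = 1 := by
  rw [Cs, HahnSeries.single_zero_one, map_one]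

lemma Cs_pow (u : ℤ) (e : ℕ) : (Cs u : MvPolynomial σ K) ^ e = Cs (e * u) := by
  rw [Cs, Cs, ← map_pow, HahnSeries.single_pow]
  norm_num

lemma CC_mul_CC (z w : ℂ) : (CC z : MvPolynomial σ K) * CC w = CC (z * w) := by
  rw [CC, CC, CC, ← map_mul, HahnSeries.single_mul_single, add_zero]

lemma single_coeff0 (k : ℤ) (z : ℂ) : (HahnSeries.single k z).coeff 0 = if k = 0 then z else 0 := by
  rw [HahnSeries.coeff_single]
  by_cases h : k = 0 <;> simp [h, eq_comm]

lemma apCs_mul {F : MvPolynomial σ K} {f : MvPolynomial σ ℂ} (hF : ApproxTo F f) (z : ℂ) :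
    ApproxTo (CC z * F) (MvPolynomial.C z * f) := by
  have := apMul (apC (σ := σ) (SReg.single le_rfl z)) hF
  rwa [single_coeff0, if_pos rfl] at this

lemma sreg_shift {t : K} (ht : SReg t) {k : ℤ} (hk : 1 ≤ k) {l : ℤ} (hl : l ≤ 0) :
    (HahnSeries.single k (1:ℂ) * t).coeff l = 0 := by
  have h := HahnSeries.coeff_single_mul_add (r := (1:ℂ)) (x := t) (b := k) (a := l - k)
  rw [show l - k + k = l by ring] at h
  rw [h, one_mul, ht (l - k) (by omega)]

lemma apShiftZero {F : MvPolynomial σ K} (hF : HasRegularCoeffs F) {k : ℤ} (hk : 1 ≤ k) :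
    ApproxTo (Cs k * F) 0 := by
  constructor
  · intro m l hl
    rw [Cs, MvPolynomial.coeff_C_mul]
    exact sreg_shift (sreg_of F hF m) hk (le_of_lt hl)
  · intro m
    rw [Cs, MvPolynomial.coeff_C_mul]
    rw [sreg_shift (sreg_of F hF m) hk le_rfl]
    simp

lemma apHomog {F : MvPolynomial σ K} {f : MvPolynomial σ ℂ} (hF : ApproxTo F f) (j : ℕ) :
    ApproxTo (homogeneousComponent j F) (homogeneousComponent j f) := by
  constructor
  · intro m k hk
    rw [coeff_homogeneousComponent]
    split
    · exact hF.1 m k hk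
    · exact HahnSeries.coeff_zero
  · intro m
    rw [coeff_homogeneousComponent, coeff_homogeneousComponent]
    split
    · exact hF.2 m
    · exact HahnSeries.coeff_zero

end Poly

section Sym
variable {σ : Type*} {ι : Type*} [Fintype ι]

/-- elementary symmetric function of a family of polynomials -/
def Esym (c : ι → MvPolynomial σ K) (k : ℕ) : MvPolynomial σ K :=
  ∑ t ∈ Finset.powersetCard k Finset.univ, ∏ i ∈ t, c i

lemma regEsym {c : ι → MvPolynomial σ K} (hc : ∀ i, HasRegularCoeffs (c i)) (k : ℕ) :
    HasRegularCoeffs (Esym c k) :=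
  regSum fun t _ => regProd fun i _ => hc i

lemma Esym_zero (c : ι → MvPolynomial σ K) : Esym c 0 = 1 := by
  rw [Esym, Finset.powersetCard_zero, Finset.sum_singleton, Finset.prod_empty]

lemma prodExpand (c : ι → MvPolynomial σ K) :
    ∏ i, (1 + Cs 1 * c i) = ∑ t ∈ Finset.univ.powerset, Cs (t.card) * ∏ i ∈ t, c i := by
  classical
  have h := Finset.prod_add (fun i => Cs 1 * c i) (fun _ => (1 : MvPolynomial σ K)) Finset.univ
  simp only [Finset.prod_const_one, mul_one] at h
  calc ∏ i, (1 + Cs 1 * c i) = ∏ i, (Cs 1 * c i + 1) := by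
        refine Finset.prod_congr rfl fun i _ => add_comm _ _
    _ = ∑ t ∈ Finset.univ.powerset, ∏ i ∈ t, (Cs 1 * c i) := h
    _ = ∑ t ∈ Finset.univ.powerset, Cs (t.card) * ∏ i ∈ t, c i := by
        refine Finset.sum_congr rfl fun t _ => ?_
        rw [Finset.prod_mul_distrib, Finset.prod_const, Cs_pow]
        norm_num

lemma homogC_Cs {k : ℤ} {j : ℕ} (φ : MvPolynomial σ K) :
    homogeneousComponent j ((Cs k) * φ) = Cs k * homogeneousComponent j φ :=
  homogeneousComponent_C_mul φ j _

lemma homogComp_prod {c : ι → MvPolynomial σ K} (hc : ∀ i, (c i).IsHomogeneous 1) (k : ℕ) :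
    homogeneousComponent k (∏ i, (1 + Cs 1 * c i)) = Cs k * Esym c k := by
  classical
  rw [prodExpand, map_sum]
  have hcomp : ∀ t : Finset ι, homogeneousComponent k (Cs (t.card) * ∏ i ∈ t, c i)
      = if k = t.card then Cs (t.card) * ∏ i ∈ t, c i else 0 := by
    intro t
    rw [Cs, homogeneousComponent_C_mul]
    have hh : (∏ i ∈ t, c i).IsHomogeneous t.card := by
      have := MvPolynomial.IsHomogeneous.prod t c (fun _ => 1) (fun i _ => hc i)
      simpa using this
    rw [homogeneousComponent_of_mem ((MvPolynomial.mem_homogeneousSubmodule _ _).2 hh)]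
    split <;> simp
  calc (∑ t ∈ Finset.univ.powerset, homogeneousComponent k (Cs (t.card) * ∏ i ∈ t, c i))
      = ∑ t ∈ Finset.univ.powerset,
          (if k = t.card then Cs (t.card) * ∏ i ∈ t, c i else 0) :=
        Finset.sum_congr rfl fun t _ => hcomp t
    _ = ∑ t ∈ Finset.univ.powerset.filter (fun t => k = t.card),
          Cs (t.card) * ∏ i ∈ t, c i := (Finset.sum_filter _ _).symm
    _ = ∑ t ∈ Finset.powersetCard k Finset.univ, Cs k * ∏ i ∈ t, c i := by
        rw [Finset.powersetCard_eq_filter]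
        refine Finset.sum_congr (by ext t; simp [eq_comm]) fun t ht => ?_
        rw [Finset.mem_filter] at ht
        rw [ht.2]
    _ = Cs k * Esym c k := by rw [Esym, Finset.mul_sum]

end Sym

section Subst
variable {σ : Type*}

lemma mulRight_inj {j : ℕ} (hj : 1 ≤ j) :
    Function.Injective (AddMonoidHom.mulRight (j:ℤ)) := by
  intro x y h
  simp only [AddMonoidHom.coe_mulRight] at h
  exact mul_right_cancel₀ (by exact_mod_cast Nat.one_le_iff_ne_zero.1 hj) h

lemma mulRight_mono {j : ℕ} (hj : 1 ≤ j) :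
    ∀ g g' : ℤ, (AddMonoidHom.mulRight (j:ℤ)) g ≤ (AddMonoidHom.mulRight (j:ℤ)) g' ↔ g ≤ g' := by
  intro g g'
  simp only [AddMonoidHom.coe_mulRight]
  exact mul_le_mul_iff_left₀ (by exact_mod_cast hj)

/-- the substitution `ε ↦ ε^j` on Laurent series -/
def psi (j : ℕ) (hj : 1 ≤ j) : K →+* K :=
  HahnSeries.embDomainRingHom (AddMonoidHom.mulRight (j:ℤ)) (mulRight_inj hj) (mulRight_mono hj)

lemma psi_single (j : ℕ) (hj : 1 ≤ j) (k : ℤ) (z : ℂ) :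
    psi j hj (HahnSeries.single k z) = HahnSeries.single (k * j) z := by
  rw [psi, HahnSeries.embDomainRingHom_apply, HahnSeries.embDomain_single]
  rfl

lemma psi_coeff (j : ℕ) (hj : 1 ≤ j) (s : K) (g : ℤ) :
    (psi j hj s).coeff (g * j) = s.coeff g := by
  rw [psi, HahnSeries.embDomainRingHom_apply]
  exact HahnSeries.embDomain_coeff (a := g)

lemma psi_coeff_not (j : ℕ) (hj : 1 ≤ j) (s : K) (k : ℤ) (h : ¬ ∃ g : ℤ, g * j = k) :
    (psi j hj s).coeff k = 0 := by
  rw [psi, HahnSeries.embDomainRingHom_apply]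
  exact HahnSeries.embDomain_notin_range (by simpa using h)

lemma apMap {F : MvPolynomial σ K} {f : MvPolynomial σ ℂ} (hF : ApproxTo F f)
    (j : ℕ) (hj : 1 ≤ j) : ApproxTo (MvPolynomial.map (psi j hj) F) f := by
  constructor
  · intro m k hk
    rw [MvPolynomial.coeff_map]
    by_cases h : ∃ g : ℤ, g * j = k
    · obtain ⟨g, rfl⟩ := h
      rw [psi_coeff]
      refine hF.1 m g ?_
      by_contra hg
      push_neg at hg
      have : 0 ≤ g * (j:ℤ) := mul_nonneg hg (by positivity)
      omega
    · exact psi_coeff_not j hj _ k h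
  · intro m
    rw [MvPolynomial.coeff_map]
    have h0 : ((0:ℤ) * j) = 0 := by ring
    rw [← h0, psi_coeff, hF.2]

end Subst

section Newton
variable {σ : Type*} {ι : Type*} [Fintype ι]

/-- power sums of a family of polynomials -/
def Psum (c : ι → MvPolynomial σ K) (k : ℕ) : MvPolynomial σ K := ∑ i, c i ^ k

lemma regPsum {c : ι → MvPolynomial σ K} (hc : ∀ i, HasRegularCoeffs (c i)) (k : ℕ) :
    HasRegularCoeffs (Psum c k) :=
  regSum fun i _ => regPow (hc i) k

lemma aeval_esymm (c : ι → MvPolynomial σ K) (k : ℕ) :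
    MvPolynomial.aeval c (MvPolynomial.esymm ι K k) = Esym c k := by
  simp only [MvPolynomial.esymm, Esym, map_sum, map_prod, MvPolynomial.aeval_X]

lemma aeval_psum (c : ι → MvPolynomial σ K) (k : ℕ) :
    MvPolynomial.aeval c (MvPolynomial.psum ι K k) = Psum c k := by
  rw [MvPolynomial.psum, Psum, map_sum]
  exact Finset.sum_congr rfl fun i _ => by rw [map_pow, MvPolynomial.aeval_X]

lemma newton (c : ι → MvPolynomial σ K) (j : ℕ) (hj : 0 < j) :
    Psum c j = (-1) ^ (j + 1) * (j : MvPolynomial σ K) * Esym c j -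
      ∑ p ∈ Finset.HasAntidiagonal.antidiagonal j with p.1 ∈ Set.Ioo 0 j,
        (-1) ^ p.1 * Esym c p.1 * Psum c p.2 := by
  have h := congrArg (MvPolynomial.aeval c) (MvPolynomial.psum_eq_mul_esymm_sub_sum ι K j hj)
  simp only [map_sub, map_mul, map_pow, map_neg, map_one, map_natCast, map_sum,
    aeval_esymm, aeval_psum] at h
  exact h

lemma CC_eq (z : ℂ) : (CC z : MvPolynomial σ K) =
    (MvPolynomial.C.comp (HahnSeries.C (Γ := ℤ))) z := by
  rw [CC]; rfl

lemma CC_sign_nat (k e : ℕ) : (CC ((-1:ℂ)^e * k) : MvPolynomial σ K)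
    = (-1) ^ e * (k : MvPolynomial σ K) := by
  rw [CC_eq, map_mul, map_pow, map_neg, map_one, map_natCast]

lemma CC_sign (e : ℕ) : (CC ((-1:ℂ)^e) : MvPolynomial σ K) = (-1) ^ e := by
  rw [CC_eq, map_pow, map_neg, map_one]

lemma single_neg' (a : ℤ) (r : ℂ) :
    HahnSeries.single a (-r) = - HahnSeries.single a r := by
  apply HahnSeries.coeff_injective
  funext k
  rw [HahnSeries.coeff_neg']
  simp only [Pi.neg_apply, HahnSeries.coeff_single]
  split <;> simp

end Newton

end St16

open St16

/-- If `f` of degree `d` satisfies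
`f ≡ ε^{-M} (∏ (1 + ε aᵢ) - ∏ (1 + ε bᵢ)) (mod ε)` with `M ≥ 1` and homogeneous
linear forms `aᵢ, bᵢ` with coefficients in `ℂ[[ε]]`, then `f ∈ Σ^[2md]Λ^[d]Σ`
(border), each homogeneous component of degree `j` with `1 ≤ j ≤ d` has border
Waring rank at most `2m`, and the degree-0 component of `f` is `0`. -/
theorem statement16 {n d m : ℕ} (f : MvPolynomial (Fin n) ℂ) (hdeg : f.totalDegree = d)
    (M : ℕ) (hM : 1 ≤ M)
    (a b : Fin m → MvPolynomial (Fin n) (LaurentSeries ℂ))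
    (hahom : ∀ i, (a i).IsHomogeneous 1) (hbhom : ∀ i, (b i).IsHomogeneous 1)
    (hareg : ∀ i, HasRegularCoeffs (a i)) (hbreg : ∀ i, HasRegularCoeffs (b i))
    (happrox : ApproxTo
      (C (HahnSeries.single (-(M : ℤ)) (1 : ℂ)) *
        ((∏ i, (1 + C (HahnSeries.single (1 : ℤ) (1 : ℂ)) * a i)) -
          ∏ i, (1 + C (HahnSeries.single (1 : ℤ) (1 : ℂ)) * b i))) f) :
    MemBorderSLS f (2 * m * d) d ∧
      (∀ j : ℕ, 1 ≤ j → j ≤ d →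
        borderWaringRank (homogeneousComponent j f) j ≤ 2 * m) ∧
      homogeneousComponent 0 f = 0 := by
  classical
  have happ : ApproxTo ((Cs (-(M:ℤ)) : MvPolynomial (Fin n) K) *
      ((∏ i, (1 + Cs 1 * a i)) - ∏ i, (1 + Cs 1 * b i))) f := happrox
  -- degreewise consequence of the hypothesis
  have hT : ∀ k : ℕ, ApproxTo ((Cs ((k:ℤ) - M)) * (Esym a k - Esym b k))
      (homogeneousComponent k f) := by
    intro k
    have h1 := apHomog happ k
    have h2 : homogeneousComponent k ((Cs (-(M:ℤ)) : MvPolynomial (Fin n) K) *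
        ((∏ i, (1 + Cs 1 * a i)) - ∏ i, (1 + Cs 1 * b i)))
        = Cs ((k:ℤ) - M) * (Esym a k - Esym b k) := by
      rw [homogC_Cs, map_sub, homogComp_prod hahom, homogComp_prod hbhom,
        show ((k:ℤ) - M) = (k:ℤ) + -(M:ℤ) by ring, ← Cs_mul]
      ring
    rw [h2] at h1
    exact h1
  -- degree-zero part vanishes
  have hzero : homogeneousComponent 0 f = 0 := by
    have h := hT 0
    rw [Esym_zero, Esym_zero, sub_self, mul_zero] at h
    apply MvPolynomial.ext
    intro mo
    have := h.2 mo
    simp only [MvPolynomial.coeff_zero, HahnSeries.coeff_zero] at this ⊢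
    exact this.symm
  -- main induction: shifted power sums approximate scaled components
  have main : ∀ j : ℕ, 1 ≤ j → ApproxTo ((Cs ((j:ℤ) - M) : MvPolynomial (Fin n) K) *
      (Psum a j - Psum b j))
      (MvPolynomial.C ((-1:ℂ)^(j+1) * j) * homogeneousComponent j f) := by
    intro j
    induction j using Nat.strong_induction_on with
    | _ j IH =>
      intro hj
      have Na := newton a j (by omega)
      have Nb := newton b j (by omega)
      set S : Finset (ℕ × ℕ) :=
        Finset.filter (fun p : ℕ × ℕ => p.1 ∈ Set.Ioo 0 j) (Finset.HasAntidiagonal.antidiagonal j) with hSdef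
      have hsum0 := Finset.sum_sub_distrib (s := S)
        (f := fun p : ℕ × ℕ => (-1 : MvPolynomial (Fin n) K)^p.1 * Esym a p.1 * Psum a p.2)
        (g := fun p : ℕ × ℕ => (-1 : MvPolynomial (Fin n) K)^p.1 * Esym b p.1 * Psum b p.2)
      have hsum : ∑ p ∈ S, ((-1 : MvPolynomial (Fin n) K)^p.1 *
              (Esym a p.1 * Psum a p.2 - Esym b p.1 * Psum b p.2))
          = (∑ p ∈ S, (-1 : MvPolynomial (Fin n) K)^p.1 * Esym a p.1 * Psum a p.2)
            - ∑ p ∈ S, (-1 : MvPolynomial (Fin n) K)^p.1 * Esym b p.1 * Psum b p.2 := by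
        rw [← hsum0]
        exact Finset.sum_congr rfl fun p _ => by ring
      have hd : Psum a j - Psum b j
          = ((-1 : MvPolynomial (Fin n) K)^(j+1) * (j : MvPolynomial (Fin n) K))
              * (Esym a j - Esym b j)
            - ∑ p ∈ S, ((-1 : MvPolynomial (Fin n) K)^p.1 *
                (Esym a p.1 * Psum a p.2 - Esym b p.1 * Psum b p.2)) := by
        rw [Na, Nb, hsum]; ring
      have hid : (Cs ((j:ℤ) - M) : MvPolynomial (Fin n) K) * (Psum a j - Psum b j)
          = CC ((-1:ℂ)^(j+1) * j) * ((Cs ((j:ℤ) - M)) * (Esym a j - Esym b j))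
            - ∑ p ∈ S,
              CC ((-1:ℂ)^p.1) *
                (((Cs ((p.1:ℤ) - M)) * (Esym a p.1 - Esym b p.1)) * ((Cs (p.2:ℤ)) * Psum a p.2)
                 + ((Cs (p.1:ℤ)) * Esym b p.1) *
                     ((Cs ((p.2:ℤ) - M)) * (Psum a p.2 - Psum b p.2))) := by
        rw [hd, show ∀ x y z : MvPolynomial (Fin n) K, x * (y - z) = x * y - x * z from
          fun x y z => mul_sub x y z, Finset.mul_sum]
        refine congrArg₂ (· - ·) ?_ (Finset.sum_congr rfl fun p hp => ?_)
        · rw [CC_sign_nat]; ring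
        rw [hSdef, Finset.mem_filter, Finset.HasAntidiagonal.mem_antidiagonal] at hp
        have hpj' : p.1 + p.2 = j := hp.1
        have h1 : (Cs ((p.1:ℤ) - M) : MvPolynomial (Fin n) K) * Cs (p.2:ℤ)
            = Cs ((j:ℤ) - M) := by
          rw [Cs_mul, show (p.1:ℤ) - M + (p.2:ℤ) = (j:ℤ) - M by omega]
        have h2 : (Cs (p.1:ℤ) : MvPolynomial (Fin n) K) * Cs ((p.2:ℤ) - M)
            = Cs ((j:ℤ) - M) := by
          rw [Cs_mul, show (p.1:ℤ) + ((p.2:ℤ) - M) = (j:ℤ) - M by omega]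
        rw [CC_sign]
        refine Eq.trans (b := (-1 : MvPolynomial (Fin n) K)^p.1 *
            ((Cs ((p.1:ℤ) - M) * Cs (p.2:ℤ)) * ((Esym a p.1 - Esym b p.1) * Psum a p.2)
             + (Cs (p.1:ℤ) * Cs ((p.2:ℤ) - M)) * (Esym b p.1 * (Psum a p.2 - Psum b p.2))))
          ?_ ?_
        · rw [h1, h2]; ring
        · ring
      rw [hid]
      have hmain := apCs_mul (hT j) ((-1:ℂ)^(j+1) * j)
      have hterm : ∀ p ∈ S,
          ApproxTo (CC ((-1:ℂ)^p.1) *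
              (((Cs ((p.1:ℤ) - M)) * (Esym a p.1 - Esym b p.1)) * ((Cs (p.2:ℤ)) * Psum a p.2)
               + ((Cs (p.1:ℤ)) * Esym b p.1) *
                   ((Cs ((p.2:ℤ) - M)) * (Psum a p.2 - Psum b p.2))))
            ((0 : MvPolynomial (Fin n) ℂ)) := by
        intro p hp
        rw [hSdef, Finset.mem_filter, Finset.HasAntidiagonal.mem_antidiagonal] at hp
        have hpj : p.1 + p.2 = j := hp.1
        have hp1 : 0 < p.1 := hp.2.1
        have hp2 : p.1 < j := hp.2.2
        have hq1 : 1 ≤ p.2 := by omega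
        have hq2 : p.2 < j := by omega
        have t1 := apMul (hT p.1) (apShiftZero (k := (p.2:ℤ)) (regPsum hareg p.2) (by exact_mod_cast hq1))
        have t2 := apMul (apShiftZero (k := (p.1:ℤ)) (regEsym hbreg p.1) (by exact_mod_cast hp1))
          (IH p.2 hq2 hq1)
        have t3 := apCs_mul (apAdd t1 t2) ((-1:ℂ)^p.1)
        simpa using t3
      have hS2 := apSum hterm
      have := apSub hmain hS2
      simpa using this
  -- per-degree border Waring decompositions
  have key : ∀ j : ℕ, 1 ≤ j → ∃ ℓ : Fin (2*m) → MvPolynomial (Fin n) K,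
      (∀ i, (ℓ i).IsHomogeneous 1) ∧ ApproxTo (∑ i, ℓ i ^ j) (homogeneousComponent j f) := by
    intro j hj
    have hc : ((-1:ℂ)^(j+1) * j) ≠ 0 := by
      refine mul_ne_zero (pow_ne_zero _ (by norm_num)) ?_
      exact_mod_cast (by omega : j ≠ 0)
    obtain ⟨za, hza⟩ := IsAlgClosed.exists_pow_nat_eq (k := ℂ)
      (((-1:ℂ)^(j+1) * j)⁻¹) (n := j) (by omega)
    obtain ⟨zb, hzb⟩ := IsAlgClosed.exists_pow_nat_eq (k := ℂ)
      (-((-1:ℂ)^(j+1) * j)⁻¹) (n := j) (by omega)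
    set La : Fin m → MvPolynomial (Fin n) K := fun i =>
      C (HahnSeries.single ((j:ℤ) - M) za) * MvPolynomial.map (psi j hj) (a i) with hLadef
    set Lb : Fin m → MvPolynomial (Fin n) K := fun i =>
      C (HahnSeries.single ((j:ℤ) - M) zb) * MvPolynomial.map (psi j hj) (b i) with hLbdef
    have helim : ∀ s : Fin m ⊕ Fin m, (Sum.elim La Lb s).IsHomogeneous 1 := by
      rintro (p | p)
      · exact ((hahom p).map (psi j hj)).C_mul _
      · exact ((hbhom p).map (psi j hj)).C_mul _
    refine ⟨fun i => Sum.elim La Lb (finSumFinEquiv.symm (finCongr (two_mul m) i)),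
      fun i => helim _, ?_⟩
    have hmap := apMap (main j hj) j hj
    have hmapeq : MvPolynomial.map (psi j hj)
          ((Cs ((j:ℤ) - M) : MvPolynomial (Fin n) K) * (Psum a j - Psum b j))
        = Cs (((j:ℤ) - M) * j) *
          ((∑ p, (MvPolynomial.map (psi j hj) (a p))^j)
            - ∑ p, (MvPolynomial.map (psi j hj) (b p))^j) := by
      rw [map_mul, map_sub]
      refine congrArg₂ (· * ·) ?_ (congrArg₂ (· - ·) ?_ ?_)
      · rw [Cs, Cs, MvPolynomial.map_C, psi_single]
      · rw [Psum, map_sum]; exact Finset.sum_congr rfl fun p _ => map_pow _ _ _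
      · rw [Psum, map_sum]; exact Finset.sum_congr rfl fun p _ => map_pow _ _ _
    rw [hmapeq] at hmap
    have h2 := apCs_mul hmap (((-1:ℂ)^(j+1) * j)⁻¹)
    have hCc : (MvPolynomial.C (((-1:ℂ)^(j+1) * j)⁻¹) : MvPolynomial (Fin n) ℂ) *
        (MvPolynomial.C ((-1:ℂ)^(j+1) * j) * homogeneousComponent j f)
        = homogeneousComponent j f := by
      rw [← mul_assoc, ← map_mul, inv_mul_cancel₀ hc, map_one, one_mul]
    rw [hCc] at h2
    have hsplit : (∑ i : Fin (2*m),
          (Sum.elim La Lb (finSumFinEquiv.symm (finCongr (two_mul m) i)))^j)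
        = (∑ p : Fin m, La p ^ j) + ∑ p : Fin m, Lb p ^ j := by
      rw [Fintype.sum_equiv ((finCongr (two_mul m)).trans finSumFinEquiv.symm)
        (fun i => (Sum.elim La Lb (finSumFinEquiv.symm (finCongr (two_mul m) i)))^j)
        (fun s => (Sum.elim La Lb s)^j) (fun i => rfl)]
      rw [Fintype.sum_sum_type]
      simp only [Sum.elim_inl, Sum.elim_inr]
    have hLaj : (∑ p : Fin m, La p ^ j)
        = C (HahnSeries.single (((j:ℤ) - M) * j) (((-1:ℂ)^(j+1) * j)⁻¹)) *
          ∑ p : Fin m, (MvPolynomial.map (psi j hj) (a p))^j := by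
      rw [Finset.mul_sum]
      refine Finset.sum_congr rfl fun p _ => ?_
      rw [hLadef]
      rw [mul_pow, ← map_pow, HahnSeries.single_pow,
        show j • ((j:ℤ) - (M:ℤ)) = ((j:ℤ) - M) * j from by rw [nsmul_eq_mul, mul_comm], hza]
    have hLbj : (∑ p : Fin m, Lb p ^ j)
        = C (HahnSeries.single (((j:ℤ) - M) * j) (-((-1:ℂ)^(j+1) * j)⁻¹)) *
          ∑ p : Fin m, (MvPolynomial.map (psi j hj) (b p))^j := by
      rw [Finset.mul_sum]
      refine Finset.sum_congr rfl fun p _ => ?_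
      rw [hLbdef]
      rw [mul_pow, ← map_pow, HahnSeries.single_pow,
        show j • ((j:ℤ) - (M:ℤ)) = ((j:ℤ) - M) * j from by rw [nsmul_eq_mul, mul_comm], hzb]
    have e1 : (CC (((-1:ℂ)^(j+1) * j)⁻¹) : MvPolynomial (Fin n) K) * Cs (((j:ℤ) - M) * j)
        = C (HahnSeries.single (((j:ℤ) - M) * j) (((-1:ℂ)^(j+1) * j)⁻¹)) := by
      rw [CC, Cs, ← map_mul, HahnSeries.single_mul_single, zero_add, mul_one]
    have hfinal : (∑ i : Fin (2*m),
          (Sum.elim La Lb (finSumFinEquiv.symm (finCongr (two_mul m) i)))^j)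
        = CC (((-1:ℂ)^(j+1) * j)⁻¹) * (Cs (((j:ℤ) - M) * j) *
          ((∑ p, (MvPolynomial.map (psi j hj) (a p))^j)
            - ∑ p, (MvPolynomial.map (psi j hj) (b p))^j)) := by
      rw [hsplit, hLaj, hLbj, ← mul_assoc, e1, single_neg', map_neg]
      ring
    rw [hfinal]
    exact h2
  refine ⟨?_, ?_, hzero⟩
  · -- MemBorderSLS
    choose ℓf hom ap using fun q : Fin d => key ((q:ℕ)+1) (by omega)
    refine ⟨fun i => ℓf (finProdFinEquiv.symm i).2 (finProdFinEquiv.symm i).1,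
      fun i => ((finProdFinEquiv.symm i).2 : ℕ) + 1, ?_, ?_, ?_⟩
    · intro i; exact (hom _ _).totalDegree_le
    · intro i
      dsimp only
      have := ((finProdFinEquiv.symm i).2).isLt
      omega
    · have hdecomp : f = ∑ q : Fin d, homogeneousComponent ((q:ℕ)+1) f := by
        conv_lhs => rw [← MvPolynomial.sum_homogeneousComponent f]
        rw [hdeg, Finset.sum_range_succ', hzero, add_zero, ← Fin.sum_univ_eq_sum_range]
      have hs : (∑ i : Fin (2*m*d),
            ℓf (finProdFinEquiv.symm i).2 (finProdFinEquiv.symm i).1 ^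
              (((finProdFinEquiv.symm i).2 : ℕ) + 1))
          = ∑ q : Fin d, ∑ p : Fin (2*m), ℓf q p ^ ((q:ℕ)+1) := by
        rw [← Fintype.sum_equiv finProdFinEquiv
          (fun pq : Fin (2*m) × Fin d => ℓf pq.2 pq.1 ^ ((pq.2:ℕ)+1))
          (fun i => ℓf (finProdFinEquiv.symm i).2 (finProdFinEquiv.symm i).1 ^
              (((finProdFinEquiv.symm i).2 : ℕ) + 1))
          (fun pq => by simp)]
        rw [Fintype.sum_prod_type_right]
      rw [hs, hdecomp]
      exact apSum fun q _ => ap q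
  · -- border Waring rank bound
    intro j h1 _
    obtain ⟨ℓ, hh, ha⟩ := key j h1
    exact Nat.sInf_le ⟨ℓ, hh, ha⟩
end
end

section
/- Let d, r, s ≥ 1 and let f be a homogeneous polynomial of degree d in the variables x_{ji} (1 ≤ j ≤ d, 1 ≤ i ≤ r) and y_1, …, y_s over ℂ. Suppose f is invariant under all of the following variable substitutions: (a) for every i ∈ {1,…,r} and every tuple λ_1,…,λ_d ∈ ℂ^× with λ_1⋯λ_d = 1, the map x_{ji} ↦ λ_j x_{ji} (fixing all other variables); (b) for every i ∈ {1,…,r} and every permutation σ of {1,…,d}, the map x_{ji} ↦ x_{σ(j)i}; (c) for every permutation τ of {1,…,r}, the map x_{ji} ↦ x_{jτ(i)}; (d) for every i ∈ {1,…,s} and every d-th root of unity ω, the map y_i ↦ ω y_i; (e) for every permutation π of {1,…,s}, the map y_i ↦ y_{π(i)}. Then f = α ∑_{i=1}^r ∏_{j=1}^d x_{ji} + β ∑_{i=1}^s y_i^d for some α, β ∈ ℂ. -/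
open MvPolynomial Finset

noncomputable section

theorem coeff_aeval_scale {σ : Type*} [DecidableEq σ] (c : σ → ℂ) (p : MvPolynomial σ ℂ)
    (m : σ →₀ ℕ) :
    coeff m (aeval (fun v => C (c v) * X v : σ → MvPolynomial σ ℂ) p)
      = (∏ v ∈ m.support, c v ^ m v) * coeff m p := by
  induction p using MvPolynomial.induction_on' with
  | add p q hp hq => rw [map_add, coeff_add, hp, hq, coeff_add, mul_add]
  | monomial u a =>
    have key : (aeval (fun v => C (c v) * X v : σ → MvPolynomial σ ℂ)) (monomial u a)
        = monomial u (a * ∏ v ∈ u.support, c v ^ u v) := by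
      rw [aeval_monomial, monomial_eq]
      have h1 : (u.prod fun v e => (C (c v) * X v : MvPolynomial σ ℂ) ^ e)
          = C (∏ v ∈ u.support, c v ^ u v) * u.prod fun v e => (X v : MvPolynomial σ ℂ) ^ e := by
        rw [Finsupp.prod, Finsupp.prod, map_prod, ← Finset.prod_mul_distrib]
        exact Finset.prod_congr rfl fun v _ => by rw [mul_pow, map_pow]
      rw [h1, algebraMap_eq, ← mul_assoc, ← map_mul]
    rw [key, coeff_monomial, coeff_monomial]
    split
    · next h => subst h; ring
    · ring

theorem prod_X_eq_monomial {σ ι : Type*} [DecidableEq σ] (t : Finset ι) (g : ι → σ) :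
    (∏ j ∈ t, (X (g j) : MvPolynomial σ ℂ)) = monomial (∑ j ∈ t, Finsupp.single (g j) 1) 1 := by
  classical
  induction t using Finset.induction_on with
  | empty => simp
  | insert a t h ih =>
    rw [Finset.prod_insert h, Finset.sum_insert h, ih, X, monomial_mul, mul_one]

theorem prod_support_pow {σ : Type*} [Fintype σ] (c : σ → ℂ) (m : σ →₀ ℕ) :
    ∏ v ∈ m.support, c v ^ m v = ∏ v : σ, c v ^ m v :=
  Finset.prod_subset (Finset.subset_univ _) fun v _ hv => by
    rw [Finsupp.notMem_support_iff.mp hv, pow_zero]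

/-- Polynomials stabilized by the symmetries of the product-plus-powers polynomial
`P^[d]_{r,s} = ∑_{i=1}^r ∏_{j=1}^d x_{ji} + ∑_{i=1}^s y_i^d` must be of the form
`α ∑_i ∏_j x_{ji} + β ∑_i y_i^d`.  The variables `x_{ji}` are indexed by
`Sum.inl (j, i)` and the variables `y_i` by `Sum.inr i`. -/
theorem statement19 {d r s : ℕ} (hd : 1 ≤ d) (hr : 1 ≤ r) (hs : 1 ≤ s)
    (f : MvPolynomial ((Fin d × Fin r) ⊕ Fin s) ℂ) (hf : f.IsHomogeneous d)
    -- (a) rescaling the variables `x_{1i}, …, x_{di}` of one block by scalars of product 1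
    (ha : ∀ (i : Fin r) (lam : Fin d → ℂ), (∀ j, lam j ≠ 0) → (∏ j, lam j) = 1 →
      aeval (Sum.elim
        (fun p : Fin d × Fin r =>
          if p.2 = i then C (lam p.1) * X (Sum.inl p : (Fin d × Fin r) ⊕ Fin s)
          else X (Sum.inl p : (Fin d × Fin r) ⊕ Fin s))
        (fun t : Fin s => X (Sum.inr t : (Fin d × Fin r) ⊕ Fin s))) f = f)
    -- (b) permuting the variables `x_{1i}, …, x_{di}` inside one block
    (hb : ∀ (i : Fin r) (σ : Equiv.Perm (Fin d)),
      rename (Sum.map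
        (fun p : Fin d × Fin r => if p.2 = i then (σ p.1, p.2) else p)
        (id : Fin s → Fin s)) f = f)
    -- (c) permuting the blocks of `x`-variables
    (hc : ∀ τ : Equiv.Perm (Fin r),
      rename (Sum.map
        (fun p : Fin d × Fin r => (p.1, τ p.2))
        (id : Fin s → Fin s)) f = f)
    -- (d) rescaling one `y`-variable by a `d`-th root of unity
    (hd' : ∀ (i : Fin s) (ω : ℂ), ω ^ d = 1 →
      aeval (Sum.elim
        (fun p : Fin d × Fin r => X (Sum.inl p : (Fin d × Fin r) ⊕ Fin s))
        (fun t : Fin s =>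
          if t = i then C ω * X (Sum.inr t : (Fin d × Fin r) ⊕ Fin s)
          else X (Sum.inr t : (Fin d × Fin r) ⊕ Fin s))) f = f)
    -- (e) permuting the `y`-variables
    (he : ∀ π : Equiv.Perm (Fin s),
      rename (Sum.map (id : Fin d × Fin r → Fin d × Fin r) (fun t => π t)) f = f) :
    ∃ α β : ℂ,
      f = C α * (∑ i : Fin r, ∏ j : Fin d, X (Sum.inl (j, i) : (Fin d × Fin r) ⊕ Fin s))
        + C β * (∑ i : Fin s, X (Sum.inr i : (Fin d × Fin r) ⊕ Fin s) ^ d) := by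
  classical
  let j0 : Fin d := ⟨0, hd⟩
  let i0 : Fin r := ⟨0, hr⟩
  let t0 : Fin s := ⟨0, hs⟩
  set mX : Fin r → (((Fin d × Fin r) ⊕ Fin s) →₀ ℕ) :=
    fun i => ∑ j : Fin d, Finsupp.single (Sum.inl (j, i)) 1 with hmX
  set mY : Fin s → (((Fin d × Fin r) ⊕ Fin s) →₀ ℕ) :=
    fun t => Finsupp.single (Sum.inr t) d with hmY
  -- evaluation of mX
  have mX_inl : ∀ (i : Fin r) (j' : Fin d) (i' : Fin r),
      mX i (Sum.inl (j', i')) = if i' = i then 1 else 0 := by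
    intro i j' i'
    rw [hmX]
    rw [Finsupp.finset_sum_apply]
    by_cases h : i' = i
    · subst h
      rw [if_pos rfl, Finset.sum_eq_single j']
      · simp [Finsupp.single_apply]
      · intro b _ hb; simp [Finsupp.single_apply, hb]
      · intro h; exact absurd (Finset.mem_univ _) h
    · rw [if_neg h]
      apply Finset.sum_eq_zero
      intro j _
      simp only [Finsupp.single_apply, Sum.inl.injEq, Prod.mk.injEq]
      rw [if_neg]
      rintro ⟨-, h2⟩
      exact h h2.symm
  have mX_inr : ∀ (i : Fin r) (t : Fin s), mX i (Sum.inr t) = 0 := by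
    intro i t
    rw [hmX]
    simp [Finsupp.finset_sum_apply, Finsupp.single_apply]
  -- degree of any supported monomial
  have hdeg : ∀ m : ((Fin d × Fin r) ⊕ Fin s) →₀ ℕ, coeff m f ≠ 0 → ∑ v : (Fin d × Fin r) ⊕ Fin s, m v = d := by
    intro m hm
    have h1 : (Finsupp.weight 1) m = d := hf hm
    change (Finsupp.weight fun _ => 1) m = d at h1
    rw [← Finsupp.degree_eq_weight_one] at h1
    have h2 : ∑ v ∈ m.support, m v = d := h1
    exact (Finset.sum_subset (Finset.subset_univ _) fun v _ hv =>
      Finsupp.notMem_support_iff.mp hv).symm.trans h2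
  -- (a) consequence : exponents within a block are equal
  have key_a : ∀ m : ((Fin d × Fin r) ⊕ Fin s) →₀ ℕ, coeff m f ≠ 0 → ∀ (i : Fin r) (j1 j2 : Fin d),
      m (Sum.inl (j1, i)) = m (Sum.inl (j2, i)) := by
    intro m hm i j1 j2
    by_cases hj : j1 = j2
    · rw [hj]
    have main : ∀ lam : Fin d → ℂ, (∀ j, lam j ≠ 0) → (∏ j, lam j) = 1 →
        ∏ j, lam j ^ m (Sum.inl (j, i)) = 1 := by
      intro lam hne hprod
      set c : ((Fin d × Fin r) ⊕ Fin s) → ℂ :=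
        Sum.elim (fun p => if p.2 = i then lam p.1 else 1) (fun _ => 1) with hcdef
      have hfun : (Sum.elim
          (fun p : Fin d × Fin r =>
            if p.2 = i then C (lam p.1) * X (Sum.inl p : (Fin d × Fin r) ⊕ Fin s)
            else X (Sum.inl p : (Fin d × Fin r) ⊕ Fin s))
          (fun t : Fin s => X (Sum.inr t : (Fin d × Fin r) ⊕ Fin s)))
          = fun v => C (c v) * X v := by
        funext v
        cases v with
        | inl p => by_cases h : p.2 = i <;> simp [hcdef, h]
        | inr t => simp [hcdef]
      have h0 := ha i lam hne hprod
      rw [hfun] at h0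
      have h1 := congrArg (coeff m) h0
      rw [coeff_aeval_scale] at h1
      have h2 : (∏ v ∈ m.support, c v ^ m v) = 1 :=
        mul_right_cancel₀ hm (h1.trans (one_mul _).symm)
      rw [prod_support_pow, Fintype.prod_sum_type] at h2
      simp only [hcdef, Sum.elim_inl, Sum.elim_inr, one_pow, Finset.prod_const_one,
        mul_one] at h2
      rw [Fintype.prod_prod_type] at h2
      have h3 : ∀ j : Fin d,
          (∏ i' : Fin r, (if i' = i then lam j else 1) ^ m (Sum.inl (j, i')))
            = lam j ^ m (Sum.inl (j, i)) := by
        intro j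
        rw [Finset.prod_congr rfl
            (g := fun i' => if i' = i then lam j ^ m (Sum.inl (j, i')) else 1)
            (fun i' _ => by by_cases h : i' = i <;> simp [h]),
          Finset.prod_ite_eq' Finset.univ i (fun i' => lam j ^ m (Sum.inl (j, i'))),
          if_pos (Finset.mem_univ _)]
      rw [Finset.prod_congr rfl fun j _ => h3 j] at h2
      exact h2
    set lam : Fin d → ℂ := fun j => if j = j1 then (2:ℂ) else if j = j2 then 2⁻¹ else 1 with hlam
    have hsplit : ∀ j, lam j = (if j = j1 then (2:ℂ) else 1) * (if j = j2 then 2⁻¹ else 1) := by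
      intro j
      simp only [hlam]
      by_cases h1 : j = j1
      · subst h1
        rw [if_pos rfl, if_pos rfl, if_neg hj, mul_one]
      · rw [if_neg h1, if_neg h1, one_mul]
    have hne : ∀ j, lam j ≠ 0 := by
      intro j; rw [hlam]; dsimp only; split_ifs <;> norm_num
    have hprod : ∏ j, lam j = 1 := by
      rw [Finset.prod_congr rfl fun j _ => hsplit j, Finset.prod_mul_distrib,
        Finset.prod_ite_eq' Finset.univ j1 (fun _ => (2:ℂ)),
        Finset.prod_ite_eq' Finset.univ j2 (fun _ => (2:ℂ)⁻¹)]
      norm_num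
    have hkey := main lam hne hprod
    have hval2 : (∏ j, lam j ^ m (Sum.inl (j, i)))
        = (2:ℂ) ^ m (Sum.inl (j1, i)) * ((2:ℂ)⁻¹) ^ m (Sum.inl (j2, i)) := by
      rw [Finset.prod_congr rfl fun j _ => by rw [hsplit j, mul_pow],
        Finset.prod_mul_distrib]
      congr 1
      · rw [Finset.prod_congr rfl
            (g := fun j => if j = j1 then (2:ℂ) ^ m (Sum.inl (j, i)) else 1)
            (fun j _ => by by_cases h : j = j1 <;> simp [h]),
          Finset.prod_ite_eq' Finset.univ j1 (fun j => (2:ℂ) ^ m (Sum.inl (j, i))),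
          if_pos (Finset.mem_univ _)]
      · rw [Finset.prod_congr rfl
            (g := fun j => if j = j2 then ((2:ℂ)⁻¹) ^ m (Sum.inl (j, i)) else 1)
            (fun j _ => by by_cases h : j = j2 <;> simp [h]),
          Finset.prod_ite_eq' Finset.univ j2 (fun j => ((2:ℂ)⁻¹) ^ m (Sum.inl (j, i))),
          if_pos (Finset.mem_univ _)]
    rw [hval2] at hkey
    have h4 : (2:ℂ) ^ m (Sum.inl (j1, i)) = 2 ^ m (Sum.inl (j2, i)) := by
      rw [inv_pow] at hkey
      exact (mul_inv_eq_one₀ (pow_ne_zero _ two_ne_zero)).mp hkey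
    have h5 : (2:ℕ) ^ m (Sum.inl (j1, i)) = (2:ℕ) ^ m (Sum.inl (j2, i)) := by
      exact_mod_cast h4
    exact Nat.pow_right_injective le_rfl h5
  -- (d) consequence : d divides each y-exponent
  have key_d : ∀ m : ((Fin d × Fin r) ⊕ Fin s) →₀ ℕ, coeff m f ≠ 0 → ∀ t : Fin s, d ∣ m (Sum.inr t) := by
    intro m hm t
    have hd0 : d ≠ 0 := by omega
    have hzeta := Complex.isPrimitiveRoot_exp d hd0
    set zeta : ℂ := Complex.exp (2 * Real.pi * Complex.I / d) with hzdef
    set c : ((Fin d × Fin r) ⊕ Fin s) → ℂ :=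
      Sum.elim (fun _ => 1) (fun t' => if t' = t then zeta else 1) with hcdef
    have hfun : (Sum.elim
        (fun p : Fin d × Fin r => X (Sum.inl p : (Fin d × Fin r) ⊕ Fin s))
        (fun t' : Fin s =>
          if t' = t then C zeta * X (Sum.inr t' : (Fin d × Fin r) ⊕ Fin s)
          else X (Sum.inr t' : (Fin d × Fin r) ⊕ Fin s)))
        = fun v => C (c v) * X v := by
      funext v
      cases v with
      | inl p => simp [hcdef]
      | inr t' => by_cases h : t' = t <;> simp [hcdef, h]
    have h0 := hd' t zeta hzeta.pow_eq_one
    rw [hfun] at h0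
    have h1 := congrArg (coeff m) h0
    rw [coeff_aeval_scale] at h1
    have h2 : (∏ v ∈ m.support, c v ^ m v) = 1 :=
      mul_right_cancel₀ hm (h1.trans (one_mul _).symm)
    rw [prod_support_pow, Fintype.prod_sum_type] at h2
    simp only [hcdef, Sum.elim_inl, Sum.elim_inr, one_pow, Finset.prod_const_one,
      one_mul] at h2
    have h3 : (∏ t' : Fin s, (if t' = t then zeta else 1) ^ m (Sum.inr t'))
        = zeta ^ m (Sum.inr t) := by
      rw [Finset.prod_congr rfl
          (g := fun t' => if t' = t then zeta ^ m (Sum.inr t') else 1)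
          (fun t' _ => by by_cases h : t' = t <;> simp [h]),
        Finset.prod_ite_eq' Finset.univ t (fun t' => zeta ^ m (Sum.inr t')),
        if_pos (Finset.mem_univ _)]
    rw [h3] at h2
    exact (hzeta.pow_eq_one_iff_dvd _).mp h2
  -- classification of monomials
  have claim1 : ∀ m : ((Fin d × Fin r) ⊕ Fin s) →₀ ℕ, coeff m f ≠ 0 → (∃ i, m = mX i) ∨ (∃ t, m = mY t) := by
    intro m hm
    have hsum := hdeg m hm
    by_cases hy : ∃ t, m (Sum.inr t) ≠ 0
    · obtain ⟨t, ht⟩ := hy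
      right
      refine ⟨t, ?_⟩
      have hge : d ≤ m (Sum.inr t) := Nat.le_of_dvd (Nat.pos_of_ne_zero ht) (key_d m hm t)
      have hle : m (Sum.inr t) ≤ d :=
        le_of_le_of_eq (Finset.single_le_sum (f := fun v => m v)
          (fun v _ => Nat.zero_le (m v)) (Finset.mem_univ _)) hsum
      have heq : m (Sum.inr t) = d := le_antisymm hle hge
      have hrest : ∀ v, v ≠ (Sum.inr t : (Fin d × Fin r) ⊕ Fin s) → m v = 0 := by
        intro v hv
        have h5 : m (Sum.inr t) + ∑ v ∈ Finset.univ.erase (Sum.inr t), m v = d := by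
          rw [Finset.add_sum_erase _ _ (Finset.mem_univ _)]
          exact hsum
        have h6 : ∑ v ∈ Finset.univ.erase (Sum.inr t), m v = 0 := by omega
        exact Finset.sum_eq_zero_iff.mp h6 v (Finset.mem_erase.mpr ⟨hv, Finset.mem_univ _⟩)
      ext v
      by_cases hv : v = Sum.inr t
      · subst hv
        rw [heq, hmY]
        simp [Finsupp.single_apply]
      · rw [hrest v hv, hmY]
        dsimp only
        rw [Finsupp.single_apply, if_neg fun h => hv h.symm]
    · push_neg at hy
      left
      have hconst : ∀ i j, m (Sum.inl (j, i)) = m (Sum.inl (j0, i)) := fun i j => key_a m hm i j j0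
      have hsum2 : ∑ v : (Fin d × Fin r) ⊕ Fin s, m v = d * ∑ i : Fin r, m (Sum.inl (j0, i)) := by
        have e1 : ∑ t : Fin s, m (Sum.inr t) = 0 := Finset.sum_eq_zero fun t _ => hy t
        rw [Fintype.sum_sum_type, e1, add_zero, Fintype.sum_prod_type,
          Finset.sum_congr rfl fun j (_ : j ∈ Finset.univ) =>
            Finset.sum_congr rfl fun i (_ : i ∈ Finset.univ) => hconst i j,
          Finset.sum_const, Finset.card_univ, Fintype.card_fin, smul_eq_mul]
      have h1 : ∑ i : Fin r, m (Sum.inl (j0, i)) = 1 := by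
        have h2 : d * ∑ i : Fin r, m (Sum.inl (j0, i)) = d * 1 := by
          rw [mul_one, ← hsum2]
          exact hsum
        exact Nat.eq_of_mul_eq_mul_left (by omega) h2
      have hex : ∃ i, m (Sum.inl (j0, i)) ≠ 0 := by
        by_contra h
        push_neg at h
        rw [Finset.sum_eq_zero (fun i _ => h i)] at h1
        omega
      obtain ⟨i, hi⟩ := hex
      refine ⟨i, ?_⟩
      have hile : m (Sum.inl (j0, i)) ≤ 1 :=
        le_of_le_of_eq (Finset.single_le_sum (f := fun i' => m (Sum.inl (j0, i')))
          (fun _ _ => Nat.zero_le _) (Finset.mem_univ i)) h1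
      have hieq : m (Sum.inl (j0, i)) = 1 := by omega
      have hothers : ∀ i', i' ≠ i → m (Sum.inl (j0, i')) = 0 := by
        intro i' hi'
        have h5 : m (Sum.inl (j0, i)) + ∑ x ∈ Finset.univ.erase i, m (Sum.inl (j0, x)) = 1 := by
          rw [Finset.add_sum_erase Finset.univ (fun x => m (Sum.inl (j0, x)))
            (Finset.mem_univ i)]
          exact h1
        have h6 : ∑ x ∈ Finset.univ.erase i, m (Sum.inl (j0, x)) = 0 := by omega
        exact Finset.sum_eq_zero_iff.mp h6 i' (Finset.mem_erase.mpr ⟨hi', Finset.mem_univ _⟩)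
      ext v
      cases v with
      | inl p =>
        obtain ⟨j, i'⟩ := p
        rw [hconst i' j, mX_inl]
        by_cases h : i' = i
        · subst h
          rw [if_pos rfl, hieq]
        · rw [if_neg h, hothers i' h]
      | inr t =>
        rw [hy t, mX_inr]
  have claim2 : ∀ i : Fin r, coeff (mX i) f = coeff (mX i0) f := by
    intro i
    have hg : Function.Injective (Sum.map (fun p : Fin d × Fin r => (p.1, Equiv.swap i0 i p.2))
        (id : Fin s → Fin s)) := by
      apply Function.Injective.sumMap _ (fun a b h => h)
      intro a b hab
      rw [Prod.ext_iff] at hab ⊢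
      exact ⟨hab.1, (Equiv.swap i0 i).injective hab.2⟩
    have h0 := coeff_rename_mapDomain _ hg f (mX i0)
    rw [hc (Equiv.swap i0 i)] at h0
    have hmap : Finsupp.mapDomain (Sum.map (fun p : Fin d × Fin r => (p.1, Equiv.swap i0 i p.2))
        (id : Fin s → Fin s)) (mX i0) = mX i := by
      simp only [hmX]
      rw [Finsupp.mapDomain_finset_sum]
      refine Finset.sum_congr rfl fun j _ => ?_
      rw [Finsupp.mapDomain_single]
      simp [Equiv.swap_apply_left]
    rw [hmap] at h0
    exact h0
  have claim3 : ∀ t : Fin s, coeff (mY t) f = coeff (mY t0) f := by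
    intro t
    have hg : Function.Injective (Sum.map (id : Fin d × Fin r → Fin d × Fin r)
        (fun x : Fin s => Equiv.swap t0 t x)) :=
      Function.Injective.sumMap (fun a b h => h) (Equiv.swap t0 t).injective
    have h0 := coeff_rename_mapDomain _ hg f (mY t0)
    rw [he (Equiv.swap t0 t)] at h0
    have hmap : Finsupp.mapDomain (Sum.map (id : Fin d × Fin r → Fin d × Fin r)
        (fun x : Fin s => Equiv.swap t0 t x)) (mY t0) = mY t := by
      simp only [hmY]
      rw [Finsupp.mapDomain_single]
      simp [Equiv.swap_apply_left]
    rw [hmap] at h0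
    exact h0
  -- conclusion
  refine ⟨coeff (mX i0) f, coeff (mY t0) f, ?_⟩
  have hP : ∀ i : Fin r,
      (∏ j : Fin d, (X (Sum.inl (j, i)) : MvPolynomial ((Fin d × Fin r) ⊕ Fin s) ℂ))
        = monomial (mX i) 1 := by
    intro i
    rw [prod_X_eq_monomial Finset.univ
      (fun j : Fin d => (Sum.inl (j, i) : (Fin d × Fin r) ⊕ Fin s))]
  have hXY : ∀ (i : Fin r) (t : Fin s), mX i ≠ mY t := by
    intro i t h
    have h2 := DFunLike.congr_fun h (Sum.inr t)
    rw [mX_inr] at h2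
    simp only [hmY] at h2
    rw [Finsupp.single_apply, if_pos rfl] at h2
    omega
  have hXinj : ∀ i i' : Fin r, mX i = mX i' ↔ i = i' := by
    intro i i'
    constructor
    · intro h
      have h2 := DFunLike.congr_fun h (Sum.inl (j0, i))
      rw [mX_inl, mX_inl, if_pos rfl] at h2
      by_contra hne
      rw [if_neg hne] at h2
      exact one_ne_zero h2
    · rintro rfl; rfl
  have hYinj : ∀ t t' : Fin s, mY t = mY t' ↔ t = t' := by
    intro t t'
    constructor
    · intro h
      by_contra hne
      have h2 := DFunLike.congr_fun h (Sum.inr t)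
      simp only [hmY] at h2
      rw [Finsupp.single_apply, Finsupp.single_apply, if_pos rfl,
        if_neg fun hh => hne (Sum.inr.inj hh).symm] at h2
      omega
    · rintro rfl; rfl
  have hRHS1 : (∑ i : Fin r, ∏ j : Fin d,
      (X (Sum.inl (j, i)) : MvPolynomial ((Fin d × Fin r) ⊕ Fin s) ℂ))
        = ∑ i : Fin r, monomial (mX i) 1 :=
    Finset.sum_congr rfl fun i _ => hP i
  have hRHS2 : (∑ t : Fin s, (X (Sum.inr t) : MvPolynomial ((Fin d × Fin r) ⊕ Fin s) ℂ) ^ d)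
        = ∑ t : Fin s, monomial (mY t) 1 :=
    Finset.sum_congr rfl fun t _ => by rw [X_pow_eq_monomial]
  ext m
  rw [hRHS1, hRHS2, coeff_add, coeff_C_mul, coeff_C_mul, coeff_sum, coeff_sum]
  simp only [coeff_monomial]
  by_cases h1 : ∃ i, m = mX i
  · obtain ⟨i, rfl⟩ := h1
    have e1 : ∑ i' : Fin r, (if mX i' = mX i then (1:ℂ) else 0) = 1 := by
      rw [Finset.sum_congr rfl fun i' (_ : i' ∈ Finset.univ) =>
          (by simp [hXinj i' i] : (if mX i' = mX i then (1:ℂ) else 0) = if i' = i then 1 else 0),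
        Finset.sum_ite_eq' Finset.univ i (fun _ => (1:ℂ)), if_pos (Finset.mem_univ _)]
    have e2 : ∑ t : Fin s, (if mY t = mX i then (1:ℂ) else 0) = 0 :=
      Finset.sum_eq_zero fun t _ => if_neg fun h => hXY i t h.symm
    rw [e1, e2, mul_one, mul_zero, add_zero]
    exact claim2 i
  · by_cases h2 : ∃ t, m = mY t
    · obtain ⟨t, rfl⟩ := h2
      have e1 : ∑ i : Fin r, (if mX i = mY t then (1:ℂ) else 0) = 0 :=
        Finset.sum_eq_zero fun i _ => if_neg (hXY i t)
      have e2 : ∑ t' : Fin s, (if mY t' = mY t then (1:ℂ) else 0) = 1 := by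
        rw [Finset.sum_congr rfl fun t' (_ : t' ∈ Finset.univ) =>
            (by simp [hYinj t' t] : (if mY t' = mY t then (1:ℂ) else 0) = if t' = t then 1 else 0),
          Finset.sum_ite_eq' Finset.univ t (fun _ => (1:ℂ)), if_pos (Finset.mem_univ _)]
      rw [e1, e2, mul_zero, mul_one, zero_add]
      exact claim3 t
    · have hz : coeff m f = 0 := by
        by_contra h
        rcases claim1 m h with ⟨i, hi⟩ | ⟨t, ht⟩
        · exact h1 ⟨i, hi⟩
        · exact h2 ⟨t, ht⟩
      push_neg at h1 h2
      rw [hz, Finset.sum_eq_zero fun i _ => if_neg fun h => h1 i h.symm,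
        Finset.sum_eq_zero fun t _ => if_neg fun h => h2 t h.symm]
      ring
end
end
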